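/- If (A,L_A) and (B,L_B) are compact quantum metric spaces with dist_q(A,B) = 0, then there is an isometry between them; concretely, there exists an affine bijection α from S(B) onto S(A) that is isometric for the metrics ρ_{L_B} and ρ_{L_A}. -/

import Mathlib

open scoped ENNReal

/-- An order-unit space in the sense of Kadison: a partially ordered real vector
space with a positive order unit `e` satisfying the order-unit property and the
Archimedean property. -/
structure OrderUnitSpace : Type 1 where
  carrier : Type
  [toAddCommGroup : AddCommGroup carrier]
  [toModule : Module ℝ carrier]
  [toPartialOrder : PartialOrder carrier]
  add_le_add_left' : ∀ a b : carrier, a ≤ b → ∀ c : carrier, c + a ≤ c + b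
  smul_nonneg' : ∀ (r : ℝ) (a : carrier), 0 ≤ r → 0 ≤ a → 0 ≤ r • a
  e : carrier
  e_nonneg : 0 ≤ e
  orderUnit : ∀ a : carrier, ∃ r : ℝ, a ≤ r • e
  arch : ∀ a : carrier, (∀ r : ℝ, 0 < r → a ≤ r • e) → a ≤ 0

attribute [instance] OrderUnitSpace.toAddCommGroup OrderUnitSpace.toModule
  OrderUnitSpace.toPartialOrder

/-- The topology generated by the open balls of a distance function. -/
def ballTopology {S : Type*} (ρ : S → S → ℝ≥0∞) : TopologicalSpace S :=
  TopologicalSpace.generateFrom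
    {U : Set S | ∃ (μ : S) (ε : ℝ≥0∞), 0 < ε ∧ U = {ν | ρ μ ν < ε}}

/-- The quotient seminorm of `L` along the surjection `π`. -/
noncomputable def quotientSeminorm {α β : Type*} (π : α → β) (L : α → ℝ) (b : β) : ℝ :=
  sInf {r : ℝ | ∃ a, π a = b ∧ L a = r}

/-- `L` induces `LB` via `π`, i.e. `LB` is the quotient seminorm of `L` for `π`. -/
def Induces {α β : Type*} (π : α → β) (L : α → ℝ) (LB : β → ℝ) : Prop :=
  ∀ b, LB b = quotientSeminorm π L b

/-- Hausdorff distance between two subsets with respect to a distance function. -/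
noncomputable def hausdorffDistWith {S : Type*} (ρ : S → S → ℝ≥0∞) (T U : Set S) : ℝ≥0∞ :=
  max (⨆ t ∈ T, ⨅ u ∈ U, ρ t u) (⨆ u ∈ U, ⨅ t ∈ T, ρ t u)

namespace OrderUnitSpace

variable (A B : OrderUnitSpace)

theorem le_of_sub_nonneg'' {x y : A.carrier} (h : 0 ≤ y - x) : x ≤ y := by
  have h2 := A.add_le_add_left' 0 (y - x) h x
  have h3 : x + (y - x) = y := by abel
  rw [add_zero, h3] at h2
  exact h2

theorem smul_e_mono {r s : ℝ} (h : r ≤ s) : r • A.e ≤ s • A.e := by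
  apply A.le_of_sub_nonneg''
  have h3 : s • A.e - r • A.e = (s - r) • A.e := by rw [sub_smul]
  rw [h3]
  exact A.smul_nonneg' _ _ (by linarith) A.e_nonneg

/-- The order-unit norm. -/
noncomputable def onorm (a : A.carrier) : ℝ :=
  sInf {r : ℝ | -(r • A.e) ≤ a ∧ a ≤ r • A.e}

/-- A state: a unital positive linear functional. -/
def IsState (μ : A.carrier →ₗ[ℝ] ℝ) : Prop :=
  μ A.e = 1 ∧ ∀ a : A.carrier, 0 ≤ a → 0 ≤ μ a

/-- The state space. -/
def State : Type := {μ : A.carrier →ₗ[ℝ] ℝ // A.IsState μ}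

/-- The weak-* topology on the state space. -/
instance : TopologicalSpace A.State :=
  TopologicalSpace.induced (fun μ : A.State => (μ.1 : A.carrier → ℝ)) Pi.topologicalSpace

/-- The metric `ρ_L` on the state space defined by a seminorm `L`. -/
noncomputable def rho (L : Seminorm ℝ A.carrier) (μ ν : A.State) : ℝ≥0∞ :=
  ⨆ a : {a : A.carrier // L a ≤ 1}, ENNReal.ofReal |μ.1 a.1 - ν.1 a.1|

/-- A Lipschitz seminorm: its null space is exactly `ℝ e`. -/
def IsLipschitz (L : Seminorm ℝ A.carrier) : Prop :=
  ∀ a : A.carrier, L a = 0 ↔ ∃ t : ℝ, a = t • A.e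

/-- A Lip-norm: a Lipschitz seminorm whose metric `ρ_L` induces the weak-* topology. -/
def IsLipNorm (L : Seminorm ℝ A.carrier) : Prop :=
  A.IsLipschitz L ∧ ballTopology (A.rho L) = (inferInstance : TopologicalSpace A.State)

/-- The diameter of the state space for `ρ_L`. -/
noncomputable def diam (L : Seminorm ℝ A.carrier) : ℝ≥0∞ :=
  ⨆ (μ : A.State) (ν : A.State), A.rho L μ ν

/-- The radius: half the diameter. -/
noncomputable def radius (L : Seminorm ℝ A.carrier) : ℝ≥0∞ := A.diam L / 2

/-- Morphism of order-unit spaces: a unital positive linear map. -/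
def IsMorphism (f : A.carrier →ₗ[ℝ] B.carrier) : Prop :=
  f A.e = B.e ∧ ∀ a : A.carrier, 0 ≤ a → 0 ≤ f a

/-- Pull back a state along a morphism; this is `S(π)`. -/
noncomputable def pullState (f : A.carrier →ₗ[ℝ] B.carrier) (hf : A.IsMorphism B f)
    (μ : B.State) : A.State :=
  ⟨(μ.1).comp f, by
    constructor
    · rw [LinearMap.comp_apply, hf.1]; exact μ.2.1
    · intro a ha; exact μ.2.2 _ (hf.2 a ha)⟩

/-- The direct sum `A ⊕ B` as an order-unit space. -/
@[reducible] def prod : OrderUnitSpace where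
  carrier := A.carrier × B.carrier
  add_le_add_left' := by
    intro a b hab c
    rw [Prod.le_def] at hab ⊢
    exact ⟨A.add_le_add_left' _ _ hab.1 _, B.add_le_add_left' _ _ hab.2 _⟩
  smul_nonneg' := by
    intro r a hr ha
    rw [Prod.le_def] at ha ⊢
    exact ⟨A.smul_nonneg' r a.1 hr ha.1, B.smul_nonneg' r a.2 hr ha.2⟩
  e := (A.e, B.e)
  e_nonneg := by
    rw [Prod.le_def]
    exact ⟨A.e_nonneg, B.e_nonneg⟩
  orderUnit := by
    intro a
    obtain ⟨r₁, h1⟩ := A.orderUnit a.1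
    obtain ⟨r₂, h2⟩ := B.orderUnit a.2
    refine ⟨max r₁ r₂, ?_⟩
    rw [Prod.le_def]
    exact ⟨le_trans h1 (A.smul_e_mono (le_max_left _ _)),
      le_trans h2 (B.smul_e_mono (le_max_right _ _))⟩
  arch := by
    intro a h
    rw [Prod.le_def]
    exact ⟨A.arch a.1 fun r hr => ((Prod.le_def.mp (h r hr)).1),
      B.arch a.2 fun r hr => ((Prod.le_def.mp (h r hr)).2)⟩

/-- The embedding of `S(A)` into `S(A ⊕ B)` dual to the first coordinate projection. -/
noncomputable def leftState (μ : A.State) : (A.prod B).State :=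
  ⟨(μ.1).comp (LinearMap.fst ℝ A.carrier B.carrier), by
    constructor
    · exact μ.2.1
    · intro p hp; exact μ.2.2 p.1 hp.1⟩

/-- The embedding of `S(B)` into `S(A ⊕ B)` dual to the second coordinate projection. -/
noncomputable def rightState (ν : B.State) : (A.prod B).State :=
  ⟨(ν.1).comp (LinearMap.snd ℝ A.carrier B.carrier), by
    constructor
    · exact ν.2.1
    · intro p hp; exact ν.2.2 p.2 hp.2⟩

/-- The set `M(L_A, L_B)` of Lip-norms on `A ⊕ B` inducing `L_A` and `L_B`
via the coordinate projections. -/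
def admissible (LA : Seminorm ℝ A.carrier) (LB : Seminorm ℝ B.carrier) :
    Set (Seminorm ℝ (A.prod B).carrier) :=
  {L | (A.prod B).IsLipNorm L ∧
    Induces (Prod.fst : A.carrier × B.carrier → A.carrier) (fun p => L p) (fun a => LA a) ∧
    Induces (Prod.snd : A.carrier × B.carrier → B.carrier) (fun p => L p) (fun b => LB b)}

/-- Quantum Gromov–Hausdorff distance. -/
noncomputable def distq (LA : Seminorm ℝ A.carrier) (LB : Seminorm ℝ B.carrier) : ℝ≥0∞ :=
  ⨅ L ∈ A.admissible B LA LB,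
    hausdorffDistWith ((A.prod B).rho L) (Set.range (A.leftState B)) (Set.range (A.rightState B))

end OrderUnitSpace

section Aux
open OrderUnitSpace Filter Topology

variable {A : OrderUnitSpace}

theorem OrderUnitSpace.sub_nonneg_of_le' {x y : A.carrier} (h : x ≤ y) : 0 ≤ y - x := by
  have h2 := A.add_le_add_left' x y h (-x)
  have h3 : -x + x = 0 := by abel
  have h4 : -x + y = y - x := by abel
  rw [h3, h4] at h2
  exact h2

theorem state_mono (μ : A.State) {x y : A.carrier} (h : x ≤ y) : μ.1 x ≤ μ.1 y := by
  have := μ.2.2 _ (OrderUnitSpace.sub_nonneg_of_le' h)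
  have h2 : μ.1 (y - x) = μ.1 y - μ.1 x := by rw [map_sub]
  linarith [h2 ▸ this]

theorem state_smul_e (μ : A.State) (t : ℝ) : μ.1 (t • A.e) = t := by
  rw [map_smul, μ.2.1]; simp

theorem state_abs_bound (a : A.carrier) : ∃ K : ℝ, ∀ μ : A.State, |μ.1 a| ≤ K := by
  obtain ⟨r, hr⟩ := A.orderUnit a
  obtain ⟨s, hs⟩ := A.orderUnit (-a)
  refine ⟨max r s, fun μ => abs_le.2 ⟨?_, ?_⟩⟩
  · have := state_mono μ hs
    rw [map_neg, state_smul_e] at this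
    have : -μ.1 a ≤ s := this
    have hms : s ≤ max r s := le_max_right r s
    linarith
  · have := state_mono μ hr
    rw [state_smul_e] at this
    exact le_trans this (le_max_left r s)

end Aux
section Aux2
open OrderUnitSpace Filter Topology

variable {A : OrderUnitSpace} {L : Seminorm ℝ A.carrier}

theorem ofReal_abs_le_rho (x y : A.State) {a : A.carrier} (ha : L a ≤ 1) :
    ENNReal.ofReal |x.1 a - y.1 a| ≤ A.rho L x y :=
  le_iSup (fun a : {a : A.carrier // L a ≤ 1} => ENNReal.ofReal |x.1 a.1 - y.1 a.1|) ⟨a, ha⟩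

theorem rho_comm (x y : A.State) : A.rho L x y = A.rho L y x := by
  unfold OrderUnitSpace.rho
  congr 1; funext a; rw [abs_sub_comm]

theorem rho_self (x : A.State) : A.rho L x x = 0 := by
  unfold OrderUnitSpace.rho
  simp

theorem rho_triangle (x y z : A.State) : A.rho L x z ≤ A.rho L x y + A.rho L y z := by
  refine iSup_le fun a => ?_
  calc ENNReal.ofReal |x.1 a.1 - z.1 a.1|
      ≤ ENNReal.ofReal (|x.1 a.1 - y.1 a.1| + |y.1 a.1 - z.1 a.1|) := by
        apply ENNReal.ofReal_le_ofReal
        exact abs_sub_le _ _ _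
    _ = ENNReal.ofReal |x.1 a.1 - y.1 a.1| + ENNReal.ofReal |y.1 a.1 - z.1 a.1| :=
        ENNReal.ofReal_add (abs_nonneg _) (abs_nonneg _)
    _ ≤ A.rho L x y + A.rho L y z :=
        add_le_add (ofReal_abs_le_rho x y a.2) (ofReal_abs_le_rho y z a.2)

/-- Scaling: if `L a ≤ r` with `r > 0` then `|x a - y a| ≤ r * ρ(x,y)`. -/
theorem ofReal_abs_le_mul_rho (x y : A.State) {a : A.carrier} {r : ℝ} (hr : 0 < r)
    (ha : L a ≤ r) : ENNReal.ofReal |x.1 a - y.1 a| ≤ ENNReal.ofReal r * A.rho L x y := by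
  have h1 : L (r⁻¹ • a) ≤ 1 := by
    rw [map_smul_eq_mul, Real.norm_eq_abs, abs_of_pos (inv_pos.2 hr), inv_mul_le_iff₀ hr]
    simpa using ha
  have h2 : ENNReal.ofReal |x.1 (r⁻¹ • a) - y.1 (r⁻¹ • a)| ≤ A.rho L x y :=
    ofReal_abs_le_rho x y h1
  have h3 : |x.1 a - y.1 a| = r * |x.1 (r⁻¹ • a) - y.1 (r⁻¹ • a)| := by
    rw [map_smul, map_smul]
    simp only [smul_eq_mul]
    rw [← mul_sub, abs_mul, abs_of_pos (inv_pos.2 hr)]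
    field_simp
  rw [h3, ENNReal.ofReal_mul hr.le]
  exact mul_le_mul_right h2 _

theorem eq_of_rho_eq_zero (hL : A.IsLipschitz L) {x y : A.State}
    (h : A.rho L x y = 0) : x = y := by
  have key : ∀ a : A.carrier, x.1 a = y.1 a := by
    intro a
    rcases le_or_gt (L a) 0 with h0 | h0
    · have h0' : L a = 0 := le_antisymm h0 (apply_nonneg L a)
      obtain ⟨t, rfl⟩ := (hL a).1 h0'
      rw [state_smul_e, state_smul_e]
    · have hle := ofReal_abs_le_mul_rho x y h0 (le_refl (L a))
      rw [h, mul_zero, nonpos_iff_eq_zero, ENNReal.ofReal_eq_zero] at hle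
      have := abs_nonneg (x.1 a - y.1 a)
      have : |x.1 a - y.1 a| = 0 := le_antisymm hle this
      have := abs_eq_zero.1 this
      linarith [sub_eq_zero.1 this]
  exact Subtype.ext (LinearMap.ext key)

end Aux2
section Aux3
open OrderUnitSpace Filter Topology

theorem ennreal_le_of_forall_eps {x y : ℝ≥0∞}
    (h : ∀ ε : ℝ, 0 < ε → x ≤ ENNReal.ofReal (1 + ε) * y) : x ≤ y := by
  have hten : Filter.Tendsto (fun n : ℕ => ENNReal.ofReal (1 + 1 / (n + 1)) * y)
      Filter.atTop (nhds (1 * y)) := by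
    apply ENNReal.Tendsto.mul_const
    · have h1 : Filter.Tendsto (fun n : ℕ => 1 + 1 / ((n : ℝ) + 1)) Filter.atTop (nhds 1) := by
        have := tendsto_one_div_add_atTop_nhds_zero_nat (𝕜 := ℝ)
        have h2 := this.const_add 1
        simpa using h2
      have := (ENNReal.continuous_ofReal.tendsto 1).comp h1
      simpa [Function.comp_def] using this
    · left; exact one_ne_zero
  rw [one_mul] at hten
  refine ge_of_tendsto hten ?_
  filter_upwards with n
  exact h (1 / (n + 1)) (by positivity)

variable {A B : OrderUnitSpace} {LA : Seminorm ℝ A.carrier} {LB : Seminorm ℝ B.carrier}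
  {L : Seminorm ℝ (A.prod B).carrier}

theorem ind_fst_le
    (hind : Induces (Prod.fst : A.carrier × B.carrier → A.carrier) (fun p => L p) (fun a => LA a))
    (a : A.carrier) (b : B.carrier) : LA a ≤ L (a, b) := by
  have h2 : LA a = quotientSeminorm Prod.fst (fun p => L p) a := hind a
  rw [h2]
  apply csInf_le
  · exact ⟨0, fun r ⟨p, _, hp⟩ => hp ▸ apply_nonneg L p⟩
  · exact ⟨(a, b), rfl, rfl⟩

theorem ind_fst_exists
    (hind : Induces (Prod.fst : A.carrier × B.carrier → A.carrier) (fun p => L p) (fun a => LA a))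
    (a : A.carrier) {ε : ℝ} (hε : 0 < ε) : ∃ b : B.carrier, L (a, b) < LA a + ε := by
  have h2 : LA a = quotientSeminorm Prod.fst (fun p => L p) a := hind a
  have h1 : quotientSeminorm Prod.fst (fun p => L p) a < LA a + ε := by rw [← h2]; linarith
  have hne : {r : ℝ | ∃ p : A.carrier × B.carrier, p.1 = a ∧ L p = r}.Nonempty :=
    ⟨L (a, 0), (a, 0), rfl, rfl⟩
  have hbdd : BddBelow {r : ℝ | ∃ p : A.carrier × B.carrier, p.1 = a ∧ L p = r} :=
    ⟨0, fun r ⟨p, _, hp⟩ => hp ▸ apply_nonneg L p⟩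
  obtain ⟨r, ⟨p, hp1, hp2⟩, hr⟩ := (csInf_lt_iff hbdd hne).1 (by unfold quotientSeminorm at h1; exact h1)
  exact ⟨p.2, by have : p = (a, p.2) := Prod.ext hp1 rfl; rw [← this, hp2]; exact hr⟩

theorem ind_snd_le
    (hind : Induces (Prod.snd : A.carrier × B.carrier → B.carrier) (fun p => L p) (fun b => LB b))
    (a : A.carrier) (b : B.carrier) : LB b ≤ L (a, b) := by
  have h2 : LB b = quotientSeminorm Prod.snd (fun p => L p) b := hind b
  rw [h2]
  apply csInf_le
  · exact ⟨0, fun r ⟨p, _, hp⟩ => hp ▸ apply_nonneg L p⟩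
  · exact ⟨(a, b), rfl, rfl⟩

theorem ind_snd_exists
    (hind : Induces (Prod.snd : A.carrier × B.carrier → B.carrier) (fun p => L p) (fun b => LB b))
    (b : B.carrier) {ε : ℝ} (hε : 0 < ε) : ∃ a : A.carrier, L (a, b) < LB b + ε := by
  have h2 : LB b = quotientSeminorm Prod.snd (fun p => L p) b := hind b
  have h1 : quotientSeminorm Prod.snd (fun p => L p) b < LB b + ε := by rw [← h2]; linarith
  have hne : {r : ℝ | ∃ p : A.carrier × B.carrier, p.2 = b ∧ L p = r}.Nonempty :=
    ⟨L (0, b), (0, b), rfl, rfl⟩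
  have hbdd : BddBelow {r : ℝ | ∃ p : A.carrier × B.carrier, p.2 = b ∧ L p = r} :=
    ⟨0, fun r ⟨p, _, hp⟩ => hp ▸ apply_nonneg L p⟩
  obtain ⟨r, ⟨p, hp1, hp2⟩, hr⟩ := (csInf_lt_iff hbdd hne).1 (by unfold quotientSeminorm at h1; exact h1)
  exact ⟨p.1, by have : p = (p.1, b) := Prod.ext rfl hp1; rw [← this, hp2]; exact hr⟩

theorem rho_left_le
    (hind : Induces (Prod.fst : A.carrier × B.carrier → A.carrier) (fun p => L p) (fun a => LA a))
    (x y : A.State) :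
    (A.prod B).rho L (A.leftState B x) (A.leftState B y) ≤ A.rho LA x y := by
  refine iSup_le fun p => ?_
  have h1 : LA p.1.1 ≤ 1 := le_trans (ind_fst_le hind p.1.1 p.1.2) p.2
  exact ofReal_abs_le_rho x y h1

theorem le_rho_left
    (hind : Induces (Prod.fst : A.carrier × B.carrier → A.carrier) (fun p => L p) (fun a => LA a))
    (x y : A.State) :
    A.rho LA x y ≤ (A.prod B).rho L (A.leftState B x) (A.leftState B y) := by
  refine iSup_le fun a => ?_
  refine ennreal_le_of_forall_eps fun ε hε => ?_
  obtain ⟨b, hb⟩ := ind_fst_exists hind a.1 hε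
  have hL : L (a.1, b) ≤ 1 + ε := le_trans hb.le (by linarith [a.2])
  have := ofReal_abs_le_mul_rho (A := A.prod B) (A.leftState B x) (A.leftState B y)
    (a := (a.1, b)) (by positivity) hL
  exact this

theorem rho_right_le
    (hind : Induces (Prod.snd : A.carrier × B.carrier → B.carrier) (fun p => L p) (fun b => LB b))
    (x y : B.State) :
    (A.prod B).rho L (A.rightState B x) (A.rightState B y) ≤ B.rho LB x y := by
  refine iSup_le fun p => ?_
  have h1 : LB p.1.2 ≤ 1 := le_trans (ind_snd_le hind p.1.1 p.1.2) p.2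
  exact ofReal_abs_le_rho x y h1

theorem le_rho_right
    (hind : Induces (Prod.snd : A.carrier × B.carrier → B.carrier) (fun p => L p) (fun b => LB b))
    (x y : B.State) :
    B.rho LB x y ≤ (A.prod B).rho L (A.rightState B x) (A.rightState B y) := by
  refine iSup_le fun b => ?_
  refine ennreal_le_of_forall_eps fun ε hε => ?_
  obtain ⟨a, ha⟩ := ind_snd_exists hind b.1 hε
  have hL : L (a, b.1) ≤ 1 + ε := le_trans ha.le (by linarith [b.2])
  have := ofReal_abs_le_mul_rho (A := A.prod B) (A.rightState B x) (A.rightState B y)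
    (a := (a, b.1)) (by positivity) hL
  exact this

end Aux3
section Aux4
open OrderUnitSpace Filter Topology

variable {A : OrderUnitSpace} {L : Seminorm ℝ A.carrier}

theorem tendsto_state_of_pointwise {ι : Type} {l : Filter ι} {f : ι → A.State} {x : A.State}
    (h : ∀ a : A.carrier, Tendsto (fun i => (f i).1 a) l (nhds (x.1 a))) :
    Tendsto f l (nhds x) := by
  have hpi : Tendsto (fun i => ((f i).1 : A.carrier → ℝ)) l (nhds (x.1 : A.carrier → ℝ)) :=
    tendsto_pi_nhds.2 h
  have hn : nhds x = Filter.comap (fun μ : A.State => (μ.1 : A.carrier → ℝ))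
      (nhds (x.1 : A.carrier → ℝ)) :=
    nhds_induced (fun μ : A.State => (μ.1 : A.carrier → ℝ)) x
  rw [hn, Filter.tendsto_comap_iff]
  exact hpi

theorem tendsto_rho_of_pointwise (hL : A.IsLipNorm L) {ι : Type} {l : Filter ι}
    {f : ι → A.State} {x : A.State}
    (h : ∀ a : A.carrier, Tendsto (fun i => (f i).1 a) l (nhds (x.1 a))) :
    Tendsto (fun i => A.rho L x (f i)) l (nhds 0) := by
  have htends : Tendsto f l (nhds x) := tendsto_state_of_pointwise h
  rw [ENNReal.tendsto_nhds_zero]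
  intro ε hε
  have hopen : IsOpen[ballTopology (A.rho L)] {y : A.State | A.rho L x y < ε} :=
    TopologicalSpace.GenerateOpen.basic _ ⟨x, ε, hε, rfl⟩
  rw [hL.2] at hopen
  have hmem : x ∈ {y : A.State | A.rho L x y < ε} := by
    simp only [Set.mem_setOf_eq, rho_self]
    exact hε
  filter_upwards [htends (hopen.mem_nhds hmem)] with i hi
  exact le_of_lt hi

theorem exists_limit_state {ι : Type} (U : Ultrafilter ι) (f : ι → A.State) :
    ∃ x : A.State, ∀ a : A.carrier, Tendsto (fun i => (f i).1 a) ↑U (nhds (x.1 a)) := by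
  have hex : ∀ a : A.carrier, ∃ r : ℝ, Tendsto (fun i => (f i).1 a) ↑U (nhds r) := by
    intro a
    obtain ⟨K, hK⟩ := state_abs_bound a
    have hcpt : IsCompact (Set.Icc (-K) K) := isCompact_Icc
    have hmem : Set.Icc (-K) K ∈ U.map (fun i => (f i).1 a) := by
      rw [Ultrafilter.mem_map]
      have : (fun i => (f i).1 a) ⁻¹' Set.Icc (-K) K = Set.univ := by
        ext i
        simp only [Set.mem_preimage, Set.mem_Icc, Set.mem_univ, iff_true]
        exact abs_le.1 (hK (f i))
      rw [this]
      exact Filter.univ_mem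
    obtain ⟨r, _, hr⟩ := hcpt.ultrafilter_le_nhds (U.map (fun i => (f i).1 a))
      (Filter.le_principal_iff.2 hmem)
    rw [Ultrafilter.coe_map] at hr
    exact ⟨r, hr⟩
  choose ℓ hℓ using hex
  have huniq : ∀ (a : A.carrier) (r : ℝ), Tendsto (fun i => (f i).1 a) ↑U (nhds r) → ℓ a = r :=
    fun a r hr => tendsto_nhds_unique (hℓ a) hr
  refine ⟨⟨{ toFun := ℓ
             map_add' := ?_
             map_smul' := ?_ }, ?_, ?_⟩, ?_⟩
  · intro a b
    refine huniq (a + b) (ℓ a + ℓ b) ?_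
    have := (hℓ a).add (hℓ b)
    simpa [map_add] using this
  · intro c a
    refine huniq (c • a) (c * ℓ a) ?_
    have := (hℓ a).const_mul c
    simpa [map_smul] using this
  · show ℓ A.e = 1
    refine huniq A.e 1 ?_
    have : (fun i => (f i).1 A.e) = fun _ => (1 : ℝ) := funext fun i => (f i).2.1
    rw [this]
    exact tendsto_const_nhds
  · intro a ha
    refine ge_of_tendsto (hℓ a) ?_
    filter_upwards with i
    exact (f i).2.2 a ha
  · exact hℓ

/-- Convex combination of two states. -/
noncomputable def comboState (t : ℝ) (ht0 : 0 ≤ t) (ht1 : t ≤ 1) (x y : A.State) : A.State :=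
  ⟨t • x.1 + (1 - t) • y.1, by
    constructor
    · simp only [LinearMap.add_apply, LinearMap.smul_apply, x.2.1, y.2.1, smul_eq_mul]
      ring
    · intro a ha
      simp only [LinearMap.add_apply, LinearMap.smul_apply, smul_eq_mul]
      have h1 := x.2.2 a ha
      have h2 := y.2.2 a ha
      nlinarith⟩

end Aux4


open OrderUnitSpace Filter Topology

/-- **Distance zero gives an isometry (Theorem 7.8 of Rieffel).** If `(A, L_A)` and
`(B, L_B)` are compact quantum metric spaces with `dist_q(A, B) = 0`, then there is
an isometry between them: an affine bijection `α` from `S(B)` onto `S(A)` which is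
isometric for the metrics `ρ_{L_B}` and `ρ_{L_A}`. -/
theorem distq_eq_zero_isometry (A B : OrderUnitSpace)
    (LA : Seminorm ℝ A.carrier) (LB : Seminorm ℝ B.carrier)
    (hLA : A.IsLipNorm LA) (hLB : B.IsLipNorm LB)
    (h : A.distq B LA LB = 0) :
    ∃ α : B.State → A.State, Function.Bijective α ∧
      (∀ μ ν : B.State, A.rho LA (α μ) (α ν) = B.rho LB μ ν) ∧
      (∀ (t : ℝ), 0 ≤ t → t ≤ 1 → ∀ μ ν σ : B.State,
        (σ.1 : B.carrier →ₗ[ℝ] ℝ) = t • μ.1 + (1 - t) • ν.1 →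
        ((α σ).1 : A.carrier →ₗ[ℝ] ℝ) = t • (α μ).1 + (1 - t) • (α ν).1) := by
  classical
  set δ : ℕ → ℝ≥0∞ := fun n => ((n : ℝ≥0∞) + 1)⁻¹ with hδdef
  have hδpos : ∀ n, 0 < δ n := by
    intro n
    simp only [hδdef]
    rw [ENNReal.inv_pos]
    exact ENNReal.add_ne_top.2 ⟨ENNReal.natCast_ne_top n, ENNReal.one_ne_top⟩
  have hchoice : ∀ n : ℕ, ∃ L ∈ A.admissible B LA LB,
      hausdorffDistWith ((A.prod B).rho L) (Set.range (A.leftState B))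
        (Set.range (A.rightState B)) < δ n := by
    intro n
    by_contra hcon
    push_neg at hcon
    have hge : δ n ≤ A.distq B LA LB := le_iInf₂ fun L hL => hcon L hL
    rw [h] at hge
    exact (hδpos n).ne' (le_antisymm hge zero_le)
  choose Lseq hmem hH using hchoice
  have hw' : ∀ (n : ℕ) (ν : B.State), ∃ μ : A.State,
      (A.prod B).rho (Lseq n) (A.leftState B μ) (A.rightState B ν) < δ n := by
    intro n ν
    have h1 : (⨆ u ∈ Set.range (A.rightState B), ⨅ t ∈ Set.range (A.leftState B),
        (A.prod B).rho (Lseq n) t u) < δ n := lt_of_le_of_lt (le_max_right _ _) (hH n)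
    have h2 : (⨅ t ∈ Set.range (A.leftState B),
        (A.prod B).rho (Lseq n) t (A.rightState B ν)) < δ n :=
      lt_of_le_of_lt (le_iSup₂ (f := fun u (_ : u ∈ Set.range (A.rightState B)) =>
        ⨅ t ∈ Set.range (A.leftState B), (A.prod B).rho (Lseq n) t u)
        (A.rightState B ν) ⟨ν, rfl⟩) h1
    rw [iInf_lt_iff] at h2
    obtain ⟨u, hu⟩ := h2
    rw [iInf_lt_iff] at hu
    obtain ⟨⟨μ, rfl⟩, hu2⟩ := hu
    exact ⟨μ, hu2⟩
  have hv' : ∀ (n : ℕ) (μ : A.State), ∃ ν : B.State,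
      (A.prod B).rho (Lseq n) (A.leftState B μ) (A.rightState B ν) < δ n := by
    intro n μ
    have h1 : (⨆ t ∈ Set.range (A.leftState B), ⨅ u ∈ Set.range (A.rightState B),
        (A.prod B).rho (Lseq n) t u) < δ n := lt_of_le_of_lt (le_max_left _ _) (hH n)
    have h2 : (⨅ u ∈ Set.range (A.rightState B),
        (A.prod B).rho (Lseq n) (A.leftState B μ) u) < δ n :=
      lt_of_le_of_lt (le_iSup₂ (f := fun t (_ : t ∈ Set.range (A.leftState B)) =>
        ⨅ u ∈ Set.range (A.rightState B), (A.prod B).rho (Lseq n) t u)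
        (A.leftState B μ) ⟨μ, rfl⟩) h1
    rw [iInf_lt_iff] at h2
    obtain ⟨u, hu⟩ := h2
    rw [iInf_lt_iff] at hu
    obtain ⟨⟨ν, rfl⟩, hu2⟩ := hu
    exact ⟨ν, hu2⟩
  choose w hw using hw'
  choose v hv using hv'
  have hindf : ∀ n, Induces (Prod.fst : A.carrier × B.carrier → A.carrier)
      (fun p => Lseq n p) (fun a => LA a) := fun n => (hmem n).2.1
  have hinds : ∀ n, Induces (Prod.snd : A.carrier × B.carrier → B.carrier)
      (fun p => Lseq n p) (fun b => LB b) := fun n => (hmem n).2.2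
  set U : Ultrafilter ℕ := Ultrafilter.of atTop with hUdef
  have hUle : (U : Filter ℕ) ≤ atTop := Ultrafilter.of_le _
  have hδ0 : Tendsto δ (U : Filter ℕ) (nhds 0) := by
    have h1 : Tendsto (fun n : ℕ => ((n : ℝ≥0∞) + 1)⁻¹) atTop (nhds 0) := by
      have := ENNReal.tendsto_inv_nat_nhds_zero
      refine tendsto_of_tendsto_of_tendsto_of_le_of_le tendsto_const_nhds this
        (fun n => zero_le) (fun n => ?_)
      exact ENNReal.inv_le_inv' le_self_add
    exact h1.mono_left hUle
  -- the maps α and β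
  set α : B.State → A.State := fun ν => Classical.choose (exists_limit_state U (fun n => w n ν))
    with hαdef
  have hα : ∀ (ν : B.State) (a : A.carrier),
      Tendsto (fun n => (w n ν).1 a) (U : Filter ℕ) (nhds ((α ν).1 a)) := fun ν =>
    Classical.choose_spec (exists_limit_state U (fun n => w n ν))
  set β : A.State → B.State := fun μ => Classical.choose (exists_limit_state U (fun n => v n μ))
    with hβdef
  have hβ : ∀ (μ : A.State) (b : B.carrier),
      Tendsto (fun n => (v n μ).1 b) (U : Filter ℕ) (nhds ((β μ).1 b)) := fun μ =>
    Classical.choose_spec (exists_limit_state U (fun n => v n μ))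
  have hαρ : ∀ ν : B.State,
      Tendsto (fun n => A.rho LA (α ν) (w n ν)) (U : Filter ℕ) (nhds 0) :=
    fun ν => tendsto_rho_of_pointwise hLA (hα ν)
  have hβρ : ∀ μ : A.State,
      Tendsto (fun n => B.rho LB (β μ) (v n μ)) (U : Filter ℕ) (nhds 0) :=
    fun μ => tendsto_rho_of_pointwise hLB (hβ μ)
  -- upper bound
  have key1 : ∀ ν ν' : B.State, A.rho LA (α ν) (α ν') ≤ B.rho LB ν ν' := by
    intro ν ν'
    have est : ∀ n, A.rho LA (α ν) (α ν') ≤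
        A.rho LA (α ν) (w n ν) + (δ n + B.rho LB ν ν' + δ n) + A.rho LA (α ν') (w n ν') := by
      intro n
      have t1 : A.rho LA (α ν) (α ν') ≤
          A.rho LA (α ν) (w n ν) + A.rho LA (w n ν) (w n ν') + A.rho LA (w n ν') (α ν') :=
        le_trans (rho_triangle _ _ _) (by
          exact add_le_add_left (rho_triangle _ _ _) _)
      have mid : A.rho LA (w n ν) (w n ν') ≤ δ n + B.rho LB ν ν' + δ n := by
        calc A.rho LA (w n ν) (w n ν')
            ≤ (A.prod B).rho (Lseq n) (A.leftState B (w n ν)) (A.leftState B (w n ν')) :=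
              le_rho_left (hindf n) _ _
          _ ≤ (A.prod B).rho (Lseq n) (A.leftState B (w n ν)) (A.rightState B ν)
              + (A.prod B).rho (Lseq n) (A.rightState B ν) (A.rightState B ν')
              + (A.prod B).rho (Lseq n) (A.rightState B ν') (A.leftState B (w n ν')) :=
              le_trans (rho_triangle _ _ _) (add_le_add_left (rho_triangle _ _ _) _)
          _ ≤ δ n + B.rho LB ν ν' + δ n := by
              refine add_le_add (add_le_add (hw n ν).le (rho_right_le (hinds n) _ _)) ?_
              rw [rho_comm]
              exact (hw n ν').le
      calc A.rho LA (α ν) (α ν')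
          ≤ A.rho LA (α ν) (w n ν) + A.rho LA (w n ν) (w n ν') + A.rho LA (w n ν') (α ν') := t1
        _ ≤ A.rho LA (α ν) (w n ν) + (δ n + B.rho LB ν ν' + δ n) + A.rho LA (α ν') (w n ν') := by
            refine add_le_add (add_le_add_right mid _) ?_
            rw [rho_comm]
    have hlim : Tendsto (fun n => A.rho LA (α ν) (w n ν) + (δ n + B.rho LB ν ν' + δ n)
        + A.rho LA (α ν') (w n ν')) (U : Filter ℕ)
        (nhds (0 + (0 + B.rho LB ν ν' + 0) + 0)) :=
      ((hαρ ν).add ((hδ0.add tendsto_const_nhds).add hδ0)).add (hαρ ν')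
    rw [zero_add, zero_add, add_zero, add_zero] at hlim
    exact ge_of_tendsto hlim (Filter.Eventually.of_forall est)
  -- lower bound
  have key2 : ∀ ν ν' : B.State, B.rho LB ν ν' ≤ A.rho LA (α ν) (α ν') := by
    intro ν ν'
    have est : ∀ n, B.rho LB ν ν' ≤
        δ n + (A.rho LA (α ν) (w n ν) + A.rho LA (α ν) (α ν') + A.rho LA (α ν') (w n ν'))
        + δ n := by
      intro n
      have t0 : B.rho LB ν ν' ≤
          (A.prod B).rho (Lseq n) (A.rightState B ν) (A.rightState B ν') :=
        le_rho_right (hinds n) _ _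
      have t1 : (A.prod B).rho (Lseq n) (A.rightState B ν) (A.rightState B ν') ≤
          (A.prod B).rho (Lseq n) (A.rightState B ν) (A.leftState B (w n ν))
          + (A.prod B).rho (Lseq n) (A.leftState B (w n ν)) (A.leftState B (w n ν'))
          + (A.prod B).rho (Lseq n) (A.leftState B (w n ν')) (A.rightState B ν') :=
        le_trans (rho_triangle _ _ _) (add_le_add_left (rho_triangle _ _ _) _)
      have t2 : (A.prod B).rho (Lseq n) (A.leftState B (w n ν)) (A.leftState B (w n ν')) ≤
          A.rho LA (α ν) (w n ν) + A.rho LA (α ν) (α ν') + A.rho LA (α ν') (w n ν') := by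
        refine le_trans (rho_left_le (hindf n) _ _) ?_
        have s1 : A.rho LA (w n ν) (w n ν') ≤ A.rho LA (w n ν) (α ν) + A.rho LA (α ν) (w n ν') :=
          rho_triangle _ _ _
        have s2 : A.rho LA (α ν) (w n ν') ≤ A.rho LA (α ν) (α ν') + A.rho LA (α ν') (w n ν') :=
          rho_triangle _ _ _
        calc A.rho LA (w n ν) (w n ν')
            ≤ A.rho LA (w n ν) (α ν) + A.rho LA (α ν) (w n ν') := s1
          _ ≤ A.rho LA (w n ν) (α ν) + (A.rho LA (α ν) (α ν') + A.rho LA (α ν') (w n ν')) :=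
              add_le_add_right s2 _
          _ = A.rho LA (α ν) (w n ν) + A.rho LA (α ν) (α ν') + A.rho LA (α ν') (w n ν') := by
              rw [rho_comm (w n ν) (α ν), add_assoc]
      refine le_trans t0 (le_trans t1 ?_)
      refine add_le_add (add_le_add ?_ t2) (hw n ν').le
      rw [rho_comm]
      exact (hw n ν).le
    have hlim : Tendsto (fun n => δ n + (A.rho LA (α ν) (w n ν) + A.rho LA (α ν) (α ν')
        + A.rho LA (α ν') (w n ν')) + δ n) (U : Filter ℕ)
        (nhds (0 + (0 + A.rho LA (α ν) (α ν') + 0) + 0)) :=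
      (hδ0.add (((hαρ ν).add tendsto_const_nhds).add (hαρ ν'))).add hδ0
    rw [zero_add, zero_add, add_zero, add_zero] at hlim
    exact ge_of_tendsto hlim (Filter.Eventually.of_forall est)
  have hiso : ∀ ν ν' : B.State, A.rho LA (α ν) (α ν') = B.rho LB ν ν' :=
    fun ν ν' => le_antisymm (key1 ν ν') (key2 ν ν')
  -- surjectivity
  have hsurj : ∀ μ : A.State, α (β μ) = μ := by
    intro μ
    have est : ∀ n, A.rho LA μ (α (β μ)) ≤
        (δ n + B.rho LB (β μ) (v n μ) + δ n) + A.rho LA (α (β μ)) (w n (β μ)) := by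
      intro n
      have t1 : A.rho LA μ (α (β μ)) ≤
          A.rho LA μ (w n (β μ)) + A.rho LA (w n (β μ)) (α (β μ)) := rho_triangle _ _ _
      have t2 : A.rho LA μ (w n (β μ)) ≤ δ n + B.rho LB (β μ) (v n μ) + δ n := by
        calc A.rho LA μ (w n (β μ))
            ≤ (A.prod B).rho (Lseq n) (A.leftState B μ) (A.leftState B (w n (β μ))) :=
              le_rho_left (hindf n) _ _
          _ ≤ (A.prod B).rho (Lseq n) (A.leftState B μ) (A.rightState B (v n μ))
              + (A.prod B).rho (Lseq n) (A.rightState B (v n μ)) (A.rightState B (β μ))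
              + (A.prod B).rho (Lseq n) (A.rightState B (β μ)) (A.leftState B (w n (β μ))) :=
              le_trans (rho_triangle _ _ _) (add_le_add_left (rho_triangle _ _ _) _)
          _ ≤ δ n + B.rho LB (β μ) (v n μ) + δ n := by
              refine add_le_add (add_le_add (hv n μ).le ?_) ?_
              · refine le_trans (rho_right_le (hinds n) _ _) ?_
                rw [rho_comm]
              · rw [rho_comm]
                exact (hw n (β μ)).le
      calc A.rho LA μ (α (β μ))
          ≤ A.rho LA μ (w n (β μ)) + A.rho LA (w n (β μ)) (α (β μ)) := t1
        _ ≤ (δ n + B.rho LB (β μ) (v n μ) + δ n) + A.rho LA (α (β μ)) (w n (β μ)) := by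
            refine add_le_add t2 ?_
            rw [rho_comm]
    have hlim : Tendsto (fun n => (δ n + B.rho LB (β μ) (v n μ) + δ n)
        + A.rho LA (α (β μ)) (w n (β μ))) (U : Filter ℕ) (nhds ((0 + 0 + 0) + 0)) :=
      ((hδ0.add (hβρ μ)).add hδ0).add (hαρ (β μ))
    rw [zero_add, zero_add, zero_add] at hlim
    have hz : A.rho LA μ (α (β μ)) = 0 :=
      le_antisymm (ge_of_tendsto hlim (Filter.Eventually.of_forall est)) zero_le
    exact (eq_of_rho_eq_zero hLA.1 hz).symm
  have hinj : Function.Injective α := by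
    intro ν ν' hνν'
    have : B.rho LB ν ν' = 0 := by
      rw [← hiso ν ν', hνν', rho_self]
    exact eq_of_rho_eq_zero hLB.1 this
  refine ⟨α, ⟨hinj, fun μ => ⟨β μ, hsurj μ⟩⟩, hiso, ?_⟩
  -- affinity
  intro t ht0 ht1 μ ν σ hσ
  set c : A.State := comboState t ht0 ht1 (α μ) (α ν) with hcdef
  have hgoal : α σ = c := by
    have hcn : ∀ n a, (comboState t ht0 ht1 (w n μ) (w n ν)).1 a
        = t * (w n μ).1 a + (1 - t) * (w n ν).1 a := by
      intro n a
      simp [comboState]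
    have hcl : ∀ a, Tendsto (fun n => (comboState t ht0 ht1 (w n μ) (w n ν)).1 a)
        (U : Filter ℕ) (nhds (c.1 a)) := by
      intro a
      have h1 := ((hα μ a).const_mul t).add ((hα ν a).const_mul (1 - t))
      have h2 : c.1 a = t * (α μ).1 a + (1 - t) * (α ν).1 a := by
        simp [hcdef, comboState]
      rw [h2]
      simpa only [hcn] using h1
    have hcρ : Tendsto (fun n => A.rho LA c (comboState t ht0 ht1 (w n μ) (w n ν)))
        (U : Filter ℕ) (nhds 0) := tendsto_rho_of_pointwise hLA hcl
    have hmid : ∀ n, (A.prod B).rho (Lseq n)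
        (A.leftState B (comboState t ht0 ht1 (w n μ) (w n ν))) (A.rightState B σ)
        ≤ δ n + δ n := by
      intro n
      refine iSup_le fun p => ?_
      have hL : (A.leftState B (comboState t ht0 ht1 (w n μ) (w n ν))).1 p.1
          = t * (w n μ).1 p.1.1 + (1 - t) * (w n ν).1 p.1.1 := by
        simp [OrderUnitSpace.leftState, hcn]
      have hR : (A.rightState B σ).1 p.1 = t * μ.1 p.1.2 + (1 - t) * ν.1 p.1.2 := by
        simp [OrderUnitSpace.rightState, hσ]
      have habs : |(A.leftState B (comboState t ht0 ht1 (w n μ) (w n ν))).1 p.1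
          - (A.rightState B σ).1 p.1|
          ≤ t * |(A.leftState B (w n μ)).1 p.1 - (A.rightState B μ).1 p.1|
          + (1 - t) * |(A.leftState B (w n ν)).1 p.1 - (A.rightState B ν).1 p.1| := by
        rw [hL, hR]
        have e1 : (A.leftState B (w n μ)).1 p.1 = (w n μ).1 p.1.1 := rfl
        have e2 : (A.rightState B μ).1 p.1 = μ.1 p.1.2 := rfl
        have e3 : (A.leftState B (w n ν)).1 p.1 = (w n ν).1 p.1.1 := rfl
        have e4 : (A.rightState B ν).1 p.1 = ν.1 p.1.2 := rfl
        rw [e1, e2, e3, e4]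
        have : t * (w n μ).1 p.1.1 + (1 - t) * (w n ν).1 p.1.1
            - (t * μ.1 p.1.2 + (1 - t) * ν.1 p.1.2)
            = t * ((w n μ).1 p.1.1 - μ.1 p.1.2) + (1 - t) * ((w n ν).1 p.1.1 - ν.1 p.1.2) := by
          ring
        rw [this]
        refine le_trans (abs_add_le _ _) ?_
        rw [abs_mul, abs_mul, abs_of_nonneg ht0, abs_of_nonneg (by linarith : (0:ℝ) ≤ 1 - t)]
      calc ENNReal.ofReal |(A.leftState B (comboState t ht0 ht1 (w n μ) (w n ν))).1 p.1
            - (A.rightState B σ).1 p.1|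
          ≤ ENNReal.ofReal (t * |(A.leftState B (w n μ)).1 p.1 - (A.rightState B μ).1 p.1|)
            + ENNReal.ofReal ((1 - t)
              * |(A.leftState B (w n ν)).1 p.1 - (A.rightState B ν).1 p.1|) := by
            refine le_trans (ENNReal.ofReal_le_ofReal habs) ?_
            rw [ENNReal.ofReal_add (mul_nonneg ht0 (abs_nonneg _)) (mul_nonneg (by linarith) (abs_nonneg _))]
        _ ≤ ENNReal.ofReal t * (A.prod B).rho (Lseq n) (A.leftState B (w n μ)) (A.rightState B μ)
            + ENNReal.ofReal (1 - t)
              * (A.prod B).rho (Lseq n) (A.leftState B (w n ν)) (A.rightState B ν) := by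
            rw [ENNReal.ofReal_mul ht0, ENNReal.ofReal_mul (by linarith : (0:ℝ) ≤ 1 - t)]
            exact add_le_add (mul_le_mul_right (ofReal_abs_le_rho _ _ p.2) _)
              (mul_le_mul_right (ofReal_abs_le_rho _ _ p.2) _)
        _ ≤ δ n + δ n := by
            refine add_le_add ?_ ?_
            · refine le_trans (mul_le_mul' (ENNReal.ofReal_le_one.2 ht1) (hw n μ).le) ?_
              rw [one_mul]
            · refine le_trans (mul_le_mul' (ENNReal.ofReal_le_one.2 (by linarith)) (hw n ν).le) ?_
              rw [one_mul]
    have est : ∀ n, A.rho LA (α σ) c ≤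
        A.rho LA (α σ) (w n σ) + (δ n + (δ n + δ n))
        + A.rho LA c (comboState t ht0 ht1 (w n μ) (w n ν)) := by
      intro n
      have t1 : A.rho LA (α σ) c ≤
          A.rho LA (α σ) (w n σ) + A.rho LA (w n σ) (comboState t ht0 ht1 (w n μ) (w n ν))
          + A.rho LA (comboState t ht0 ht1 (w n μ) (w n ν)) c :=
        le_trans (rho_triangle _ _ _) (add_le_add_left (rho_triangle _ _ _) _)
      have t2 : A.rho LA (w n σ) (comboState t ht0 ht1 (w n μ) (w n ν)) ≤ δ n + (δ n + δ n) := by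
        calc A.rho LA (w n σ) (comboState t ht0 ht1 (w n μ) (w n ν))
            ≤ (A.prod B).rho (Lseq n) (A.leftState B (w n σ))
              (A.leftState B (comboState t ht0 ht1 (w n μ) (w n ν))) :=
              le_rho_left (hindf n) _ _
          _ ≤ (A.prod B).rho (Lseq n) (A.leftState B (w n σ)) (A.rightState B σ)
              + (A.prod B).rho (Lseq n) (A.rightState B σ)
                (A.leftState B (comboState t ht0 ht1 (w n μ) (w n ν))) := rho_triangle _ _ _
          _ ≤ δ n + (δ n + δ n) := by
              refine add_le_add (hw n σ).le ?_
              rw [rho_comm]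
              exact hmid n
      calc A.rho LA (α σ) c
          ≤ A.rho LA (α σ) (w n σ) + A.rho LA (w n σ) (comboState t ht0 ht1 (w n μ) (w n ν))
            + A.rho LA (comboState t ht0 ht1 (w n μ) (w n ν)) c := t1
        _ ≤ A.rho LA (α σ) (w n σ) + (δ n + (δ n + δ n))
            + A.rho LA c (comboState t ht0 ht1 (w n μ) (w n ν)) := by
            refine add_le_add (add_le_add_right t2 _) ?_
            rw [rho_comm]
    have hlim : Tendsto (fun n => A.rho LA (α σ) (w n σ) + (δ n + (δ n + δ n))
        + A.rho LA c (comboState t ht0 ht1 (w n μ) (w n ν))) (U : Filter ℕ)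
        (nhds (0 + (0 + (0 + 0)) + 0)) :=
      ((hαρ σ).add (hδ0.add (hδ0.add hδ0))).add hcρ
    rw [zero_add, zero_add, zero_add, add_zero] at hlim
    have hz : A.rho LA (α σ) c = 0 :=
      le_antisymm (ge_of_tendsto hlim (Filter.Eventually.of_forall est)) zero_le
    exact eq_of_rho_eq_zero hLA.1 hz
  rw [hgoal]
  rfl
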